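/- For every subset S of the vertices of an ADMG G(V), there exists a reachable set ⟨S⟩ with S ⊆ ⟨S⟩ such that ⟨S⟩ ⊆ T for every reachable set T with S ⊆ T; in particular, a unique smallest reachable superset of S (the reachable closure of S) exists. -/

import Mathlib

/-- A conditional acyclic directed mixed graph (CADMG) on vertex type `V`:
a directed edge relation `dir` with no directed cycles, a symmetric irreflexive
bidirected edge relation `bi`, and a set `rnd` of random vertices (the remaining
vertices being fixed), such that no directed edge points into a fixed vertex and
no bidirected edge is incident to a fixed vertex.  An ADMG is the special case
`rnd = Set.univ`. -/
structure CADMG (V : Type*) where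
  dir : V → V → Prop
  bi : V → V → Prop
  rnd : Set V
  acyclic : ∀ v, ¬ Relation.TransGen dir v v
  bi_symm : ∀ a b, bi a b → bi b a
  bi_irrefl : ∀ a, ¬ bi a a
  dir_rnd : ∀ a b, dir a b → b ∈ rnd
  bi_rnd : ∀ a b, bi a b → a ∈ rnd ∧ b ∈ rnd

namespace CADMG

variable {V : Type*}

/-- A random vertex `r` is fixable if there is no other vertex `w` with both a
directed path from `r` to `w` and a bidirected path from `r` to `w`. -/
def Fixable (G : CADMG V) (r : V) : Prop :=
  r ∈ G.rnd ∧
    ¬ ∃ w, w ≠ r ∧ Relation.ReflTransGen G.dir r w ∧ Relation.ReflTransGen G.bi r w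

/-- The fixing operator: move `r` from the random to the fixed vertices and delete
all directed edges into `r` and all bidirected edges incident to `r`. -/
def fix (G : CADMG V) (r : V) : CADMG V where
  dir a b := G.dir a b ∧ b ≠ r
  bi a b := G.bi a b ∧ a ≠ r ∧ b ≠ r
  rnd := G.rnd \ {r}
  acyclic v h := G.acyclic v (Relation.TransGen.mono (p := G.dir) (fun _ _ hab => hab.1) v v h)
  bi_symm a b h := ⟨G.bi_symm a b h.1, h.2.2, h.2.1⟩
  bi_irrefl a h := G.bi_irrefl a h.1
  dir_rnd a b h := ⟨G.dir_rnd a b h.1, h.2⟩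
  bi_rnd a b h := ⟨⟨(G.bi_rnd a b h.1).1, h.2.1⟩, (G.bi_rnd a b h.1).2, h.2.2⟩

/-- A sequence of vertices is a valid fixing sequence if it is empty, or its head is
fixable and its tail is valid in the graph obtained by fixing the head. -/
def Valid (G : CADMG V) : List V → Prop
  | [] => True
  | r :: rest => G.Fixable r ∧ (G.fix r).Valid rest

/-- `φ_σ(G)`: the CADMG obtained by applying the fixing operators along the list `σ`. -/
def fixList (G : CADMG V) : List V → CADMG V
  | [] => G
  | r :: rest => (G.fix r).fixList rest

/-- A set `R` of random vertices is reachable if some ordering of the remaining random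
vertices is a valid fixing sequence. -/
def Reachable (G : CADMG V) (R : Set V) : Prop :=
  ∃ σ : List V, G.Valid σ ∧ ∀ v, v ∈ σ ↔ v ∈ G.rnd \ R

/-- `C` is the reachable closure of `S`: the smallest reachable superset of `S`. -/
def IsReachableClosure (G : CADMG V) (S C : Set V) : Prop :=
  G.Reachable C ∧ S ⊆ C ∧ ∀ T, G.Reachable T → S ⊆ T → C ⊆ T

/-- `D` is bidirected-connected (within `D` itself): `D` is nonempty and any two of its
elements are joined by a bidirected path staying inside `D`. -/
def BiConnected (G : CADMG V) (D : Set V) : Prop :=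
  D.Nonempty ∧ ∀ a ∈ D, ∀ b ∈ D,
    Relation.ReflTransGen (fun x y => G.bi x y ∧ x ∈ D ∧ y ∈ D) a b

/-- An intrinsic set: reachable and bidirected-connected. -/
def Intrinsic (G : CADMG V) (R : Set V) : Prop :=
  G.Reachable R ∧ G.BiConnected R

/-- The induced subgraph on a set `W` of vertices (vertices outside `W` become fixed
and lose all their edges). -/
def induce (G : CADMG V) (W : Set V) : CADMG V where
  dir a b := G.dir a b ∧ a ∈ W ∧ b ∈ W
  bi a b := G.bi a b ∧ a ∈ W ∧ b ∈ W
  rnd := G.rnd ∩ W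
  acyclic v h := G.acyclic v (Relation.TransGen.mono (p := G.dir) (fun _ _ hab => hab.1) v v h)
  bi_symm a b h := ⟨G.bi_symm a b h.1, h.2.2, h.2.1⟩
  bi_irrefl a h := G.bi_irrefl a h.1
  dir_rnd a b h := ⟨G.dir_rnd a b h.1, h.2.2⟩
  bi_rnd a b h := ⟨⟨(G.bi_rnd a b h.1).1, h.2.1⟩, (G.bi_rnd a b h.1).2, h.2.2⟩

/-- The districts of a CADMG: the connected components of its random vertices under
the bidirected edge relation. -/
def District (G : CADMG V) (D : Set V) : Prop :=
  ∃ v ∈ G.rnd, D = {w | Relation.ReflTransGen G.bi v w}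

/-- `Y*`: the set of vertices having a directed path (possibly of length zero) to an
element of `Y` that does not intersect `A`. -/
def Ystar (G : CADMG V) (A Y : Set V) : Set V :=
  {v | ∃ y ∈ Y, Relation.ReflTransGen (fun a b => G.dir a b ∧ a ∉ A ∧ b ∉ A) v y}

/-- `F` is an `R`-rooted C-forest: `R ⊆ F`, `F` is bidirected-connected in the induced
subgraph `G_F`, and there is a subgraph of `G_F` with vertex set `F` and a subset `E` of
its directed edges in which every element of `F` has a directed path (possibly of
length zero) to an element of `R`. -/
def CForest (G : CADMG V) (R F : Set V) : Prop :=
  R ⊆ F ∧ G.BiConnected F ∧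
    ∃ E : V → V → Prop,
      (∀ a b, E a b → G.dir a b ∧ a ∈ F ∧ b ∈ F) ∧
      ∀ f ∈ F, ∃ r ∈ R, Relation.ReflTransGen E f r

/-- A hedge for `(Y, A)` in `G`: a pair `(F, F')` of `R`-rooted C-forests, for some common
root set `R`, with `F ⊊ F'`, `F ∩ A = ∅`, `A ∩ (F' \ F) ≠ ∅`, and every element of `R`
has a directed path to an element of `Y` that does not intersect `A`. -/
def Hedge (G : CADMG V) (Y A : Set V) : Prop :=
  ∃ R F F', G.CForest R F ∧ G.CForest R F' ∧ F ⊂ F' ∧ F ∩ A = ∅ ∧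
    (A ∩ (F' \ F)).Nonempty ∧
    ∀ r ∈ R, ∃ y ∈ Y, Relation.ReflTransGen (fun a b => G.dir a b ∧ a ∉ A ∧ b ∉ A) r y

end CADMG


namespace CADMG

variable {V : Type*}

lemma ext' {G H : CADMG V} (h1 : G.dir = H.dir) (h2 : G.bi = H.bi)
    (h3 : G.rnd = H.rnd) : G = H := by
  cases G; cases H
  simp only at h1 h2 h3
  subst h1; subst h2; subst h3; rfl

lemma fix_comm (G : CADMG V) (v w : V) : (G.fix v).fix w = (G.fix w).fix v := by
  apply ext'
  · funext a b; simp only [fix, eq_iff_iff]; tauto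
  · funext a b; simp only [fix, eq_iff_iff]; tauto
  · simp only [fix]; ext x; simp only [Set.mem_diff, Set.mem_singleton_iff]; tauto

lemma Fixable.fix' {G : CADMG V} {v w : V} (h : G.Fixable v) (hne : v ≠ w) :
    (G.fix w).Fixable v := by
  refine ⟨⟨h.1, by simpa using hne⟩, ?_⟩
  rintro ⟨u, hu, hd, hb⟩
  exact h.2 ⟨u, hu, Relation.ReflTransGen.mono (p := G.dir) (fun a b hab => hab.1) v u hd, Relation.ReflTransGen.mono (p := G.bi) (fun a b hab => hab.1) v u hb⟩

lemma fixable_fixList {G : CADMG V} {v : V} {τ : List V} (h : G.Fixable v)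
    (hnm : v ∉ τ) : (G.fixList τ).Fixable v := by
  induction τ generalizing G with
  | nil => exact h
  | cons r t ih =>
    have hvr : v ≠ r := fun hc => hnm (hc ▸ (List.mem_cons_self : r ∈ r :: t))
    exact ih (h.fix' hvr) (fun hc => hnm (List.mem_cons_of_mem _ hc))

lemma fixList_rnd_subset (G : CADMG V) (τ : List V) : (G.fixList τ).rnd ⊆ G.rnd := by
  induction τ generalizing G with
  | nil => exact subset_rfl
  | cons r t ih =>
    exact (ih (G.fix r)).trans (fun x hx => hx.1)

lemma not_mem_rnd_fixList {G : CADMG V} {v : V} {τ : List V} (hv : v ∈ τ) :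
    v ∉ (G.fixList τ).rnd := by
  induction τ generalizing G with
  | nil => cases hv
  | cons r t ih =>
    rcases List.mem_cons.mp hv with rfl | hvt
    · intro hc
      exact (fixList_rnd_subset (G.fix v) t hc).2 rfl
    · exact ih hvt

lemma valid_erase [DecidableEq V] {G : CADMG V} {τ : List V} {r : V}
    (hτ : G.Valid τ) (hr : r ∈ τ) :
    (G.fix r).Valid (τ.erase r) ∧ (G.fix r).fixList (τ.erase r) = G.fixList τ := by
  induction τ generalizing G with
  | nil => cases hr
  | cons h t ih =>
    by_cases hhr : h = r
    · subst hhr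
      rw [List.erase_cons_head]
      exact ⟨hτ.2, rfl⟩
    · have hrt : r ∈ t := by
        rcases List.mem_cons.mp hr with rfl | h'
        · exact absurd rfl hhr
        · exact h'
      rw [List.erase_cons_tail (by simpa using hhr)]
      obtain ⟨hh, ht⟩ := hτ
      obtain ⟨hv, hfl⟩ := ih (G := G.fix h) ht hrt
      rw [fix_comm] at hv hfl
      refine ⟨⟨hh.fix' (fun hc => hhr hc), hv⟩, ?_⟩
      show ((G.fix r).fix h).fixList (t.erase r) = (G.fix h).fixList t
      exact hfl

lemma subset_of_max [DecidableEq V] {S : Set V} :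
    ∀ (σ : List V) (G : CADMG V) (τ : List V), G.Valid σ → G.Valid τ →
    (∀ v ∈ σ, v ∉ S) → (∀ v, v ∉ S → ¬ (G.fixList τ).Fixable v) →
    ∀ v ∈ σ, v ∈ τ := by
  intro σ
  induction σ with
  | nil => intro G τ _ _ _ _ v hv; cases hv
  | cons r t ih =>
    intro G τ hσ hτ hS hmax v hv
    obtain ⟨hr, htσ⟩ := hσ
    have hrS : r ∉ S := hS r List.mem_cons_self
    have hrτ : r ∈ τ := by
      by_contra hc
      exact hmax r hrS (fixable_fixList hr hc)
    obtain ⟨hτ', hfl⟩ := valid_erase hτ hrτ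
    rcases List.mem_cons.mp hv with rfl | hvt
    · exact hrτ
    · have hmax' : ∀ w, w ∉ S → ¬ ((G.fix r).fixList (τ.erase r)).Fixable w := by
        intro w hw
        rw [hfl]
        exact hmax w hw
      have := ih (G.fix r) (τ.erase r) htσ hτ'
        (fun w hw => hS w (List.mem_cons_of_mem _ hw)) hmax' v hvt
      exact List.mem_of_mem_erase this

lemma exists_max (S : Set V) :
    ∀ (n : ℕ) (G : CADMG V), G.rnd.Finite → G.rnd.ncard ≤ n →
    ∃ τ : List V, G.Valid τ ∧ (∀ v ∈ τ, v ∉ S) ∧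
      ∀ v, v ∉ S → ¬ (G.fixList τ).Fixable v := by
  intro n
  induction n with
  | zero =>
    intro G hfin hcard
    refine ⟨[], trivial, by simp, ?_⟩
    intro v _ hfix
    have : G.rnd = ∅ := (Set.ncard_eq_zero hfin).mp (Nat.le_zero.mp hcard)
    exact absurd hfix.1 (this ▸ Set.notMem_empty v)
  | succ n ih =>
    intro G hfin hcard
    by_cases hex : ∃ v, v ∉ S ∧ G.Fixable v
    · obtain ⟨v, hvS, hvfix⟩ := hex
      have hfin' : (G.fix v).rnd.Finite := hfin.subset (fun x hx => hx.1)
      have hlt : (G.fix v).rnd.ncard < G.rnd.ncard :=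
        Set.ncard_diff_singleton_lt_of_mem hvfix.1 hfin
      obtain ⟨τ, hval, hS, hmax⟩ := ih (G.fix v) hfin'
        (Nat.lt_succ_iff.mp (lt_of_lt_of_le hlt hcard))
      refine ⟨v :: τ, ⟨hvfix, hval⟩, ?_, hmax⟩
      intro w hw
      rcases List.mem_cons.mp hw with rfl | hwt
      · exact hvS
      · exact hS w hwt
    · refine ⟨[], trivial, by simp, ?_⟩
      intro v hv hfix
      exact hex ⟨v, hv, hfix⟩

end CADMG

/-- For every subset `S` of the vertices of an ADMG `G`, there is a unique
smallest reachable superset of `S` (the reachable closure of `S`). -/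
theorem reachable_closure_exists_unique
    {V : Type*} [Fintype V] (G : CADMG V) (hG : G.rnd = Set.univ) (S : Set V) :
    ∃! C : Set V, G.Reachable C ∧ S ⊆ C ∧
      ∀ T : Set V, G.Reachable T → S ⊆ T → C ⊆ T := by
  classical
  obtain ⟨τ, hval, hSτ, hmax⟩ := CADMG.exists_max S (Fintype.card V) G
    (Set.toFinite _) (by simpa [Set.ncard_univ] using Set.ncard_le_ncard (Set.subset_univ G.rnd) Set.finite_univ)
  set C : Set V := {v | v ∉ τ} with hC
  have hmem : ∀ v, v ∈ τ ↔ v ∈ G.rnd \ C := by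
    intro v
    simp [hC, hG]
  have hreach : G.Reachable C := ⟨τ, hval, hmem⟩
  have hSC : S ⊆ C := fun s hs hsτ => hSτ s hsτ hs
  have hmin : ∀ T : Set V, G.Reachable T → S ⊆ T → C ⊆ T := by
    intro T ⟨σ, hσval, hσmem⟩ hST v hvC
    by_contra hvT
    have hvσ : v ∈ σ := (hσmem v).mpr (by simp [hG, hvT])
    have hσS : ∀ w ∈ σ, w ∉ S := by
      intro w hw hwS
      exact ((hσmem w).mp hw).2 (hST hwS)
    exact hvC (CADMG.subset_of_max σ G τ hσval hval hσS hmax v hvσ)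
  refine ⟨C, ⟨hreach, hSC, hmin⟩, ?_⟩
  rintro D ⟨hDr, hSD, hDmin⟩
  exact Set.Subset.antisymm (hDmin C hreach hSC) (hmin D hDr hSD)
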